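/- For each p with 0 < p ≤ 1 there exists a constant C > 0 such that the following holds for all sufficiently large integers n and all integers K ≥ 1: if T : ℝ^n → ℝ^K and P : ℝ^K → ℝ^n are linear maps with P ∘ T = Id, and M, L > 0 satisfy ‖T(x)‖_∞ ≤ M·‖x‖_p for all x ∈ ℝ^n and ‖P(w)‖_p ≤ L·‖w‖_∞ for all w ∈ ℝ^K, then M · L ≥ C · n^{1/p − 1/2} · (log n)^{-1/2}. -/

import Mathlib

open Finset

/-- For `|u| ≤ 1`, `e^u + e^{-u} ≤ 2 exp(3u²/2)`. -/
private lemma aux_exp_bound {u : ℝ} (hu : |u| ≤ 1) :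
    Real.exp u + Real.exp (-u) ≤ 2 * Real.exp (3 / 2 * u ^ 2) := by
  have key : ∀ v : ℝ, 0 ≤ v → v ≤ 1 →
      Real.exp v + Real.exp (-v) ≤ 2 * Real.exp (3 / 2 * v ^ 2) := by
    intro v hv0 hv1
    have h2 : Real.exp (v / 2) * Real.exp (v / 2) = Real.exp v := by
      rw [← Real.exp_add]; ring_nf
    have h3 : Real.exp (-(v / 2)) * Real.exp (-(v / 2)) = Real.exp (-v) := by
      rw [← Real.exp_add]; ring_nf
    have h1 : Real.exp (v / 2) * Real.exp (-(v / 2)) = 1 := by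
      rw [← Real.exp_add]; simp
    -- d := exp(v/2) - exp(-v/2)
    have hd0 : 0 ≤ Real.exp (v / 2) - Real.exp (-(v / 2)) :=
      sub_nonneg.2 (Real.exp_le_exp.2 (by linarith))
    -- exp v - 1 ≤ v * exp v  (from 1 - v ≤ exp (-v))
    have hev : Real.exp v - 1 ≤ v * Real.exp v := by
      have := Real.add_one_le_exp (-v)
      nlinarith [Real.exp_pos v, Real.exp_pos (-v), h2 ▸ (mul_pos (Real.exp_pos (v/2)) (Real.exp_pos (v/2)))]
    -- d = exp(-v/2) * (exp v - 1) ≤ v * exp(v/2)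
    have hd : Real.exp (v / 2) - Real.exp (-(v / 2)) ≤ v * Real.exp (v / 2) := by
      have hfac : Real.exp (v / 2) - Real.exp (-(v / 2)) =
          Real.exp (-(v / 2)) * (Real.exp v - 1) := by
        have : Real.exp (-(v/2)) * Real.exp v = Real.exp (v/2) := by
          rw [← Real.exp_add]; ring_nf
        nlinarith [this, h1]
      rw [hfac]
      have h4 : Real.exp (-(v/2)) * (v * Real.exp v) = v * Real.exp (v/2) := by
        have : Real.exp (-(v/2)) * Real.exp v = Real.exp (v/2) := by
          rw [← Real.exp_add]; ring_nf
        nlinarith [this]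
      nlinarith [Real.exp_pos (-(v/2)), hev]
    -- (d)² ≤ v² * exp v ≤ 3 v²
    have hdsq : (Real.exp (v / 2) - Real.exp (-(v / 2))) ^ 2 ≤ 3 * v ^ 2 := by
      have hexpv : Real.exp v ≤ 3 := by
        calc Real.exp v ≤ Real.exp 1 := Real.exp_le_exp.2 hv1
        _ ≤ 2.7182818286 := Real.exp_one_lt_d9.le
        _ ≤ 3 := by norm_num
      have hsq : (Real.exp (v / 2) - Real.exp (-(v / 2))) ^ 2 ≤ (v * Real.exp (v/2))^2 := by
        apply sq_le_sq' <;> nlinarith [mul_nonneg hv0 (Real.exp_pos (v/2)).le]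
      calc (Real.exp (v / 2) - Real.exp (-(v / 2))) ^ 2 ≤ (v * Real.exp (v/2))^2 := hsq
      _ = v^2 * Real.exp v := by rw [mul_pow, ← h2]; ring
      _ ≤ 3 * v^2 := by nlinarith [sq_nonneg v]
    -- assemble
    have hexpand : Real.exp v + Real.exp (-v) =
        (Real.exp (v / 2) - Real.exp (-(v / 2))) ^ 2 + 2 := by nlinarith [h1, h2, h3]
    have hfin : Real.exp v + Real.exp (-v) ≤ 2 + 3 * v ^ 2 := by
      rw [hexpand]; linarith
    calc Real.exp v + Real.exp (-v) ≤ 2 + 3 * v ^ 2 := hfin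
    _ = 2 * (1 + 3 / 2 * v ^ 2) := by ring
    _ ≤ 2 * Real.exp (3 / 2 * v ^ 2) := by
        have := Real.add_one_le_exp (3 / 2 * v ^ 2)
        linarith
  rcases le_total 0 u with h | h
  · exact key u h (by rwa [abs_of_nonneg h] at hu)
  · have := key (-u) (by linarith) (by rwa [abs_of_nonpos h] at hu)
    rw [neg_neg] at this
    calc Real.exp u + Real.exp (-u) = Real.exp (-u) + Real.exp u := by ring
    _ ≤ 2 * Real.exp (3 / 2 * (-u) ^ 2) := this
    _ = 2 * Real.exp (3 / 2 * u ^ 2) := by ring_nf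


/-- MGF bound for Rademacher sums: `∑_χ exp(∑ aᵢ·εᵢ(χ)) ≤ 2ⁿ exp(3/2 ∑ aᵢ²)` when `|aᵢ| ≤ 1`. -/
private lemma aux_mgf {n : ℕ} (a : Fin n → ℝ) (ha : ∀ i, |a i| ≤ 1) :
    ∑ χ : Fin n → Bool, Real.exp (∑ i, a i * (if χ i then (1 : ℝ) else -1)) ≤
      (2 : ℝ) ^ n * Real.exp (3 / 2 * ∑ i, a i ^ 2) := by
  have hexp : ∀ χ : Fin n → Bool,
      Real.exp (∑ i, a i * (if χ i then (1 : ℝ) else -1)) =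
        ∏ i, Real.exp (a i * (if χ i then (1 : ℝ) else -1)) := fun χ => Real.exp_sum _ _
  have hprod :
      ∑ χ : Fin n → Bool, ∏ i, Real.exp (a i * (if χ i then (1 : ℝ) else -1)) =
        ∏ i, (Real.exp (a i) + Real.exp (-(a i))) := by
    classical
    rw [← Fintype.prod_sum (fun (i : Fin n) (c : Bool) => Real.exp (a i * (if c then (1:ℝ) else -1)))]
    refine Finset.prod_congr rfl fun i _ => ?_
    rw [Fintype.sum_bool]
    simp [mul_neg_one]
  calc ∑ χ : Fin n → Bool, Real.exp (∑ i, a i * (if χ i then (1 : ℝ) else -1))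
      = ∏ i, (Real.exp (a i) + Real.exp (-(a i))) := by
        rw [← hprod]; exact Finset.sum_congr rfl fun χ _ => hexp χ
    _ ≤ ∏ i, (2 * Real.exp (3 / 2 * a i ^ 2)) := by
        refine Finset.prod_le_prod (fun i _ => by positivity) fun i _ => ?_
        exact aux_exp_bound (ha i)
    _ = (2 : ℝ) ^ n * Real.exp (3 / 2 * ∑ i, a i ^ 2) := by
        rw [Finset.prod_mul_distrib, Finset.prod_const, Finset.card_univ, Fintype.card_fin,
          ← Real.exp_sum, ← Finset.mul_sum]

/-- Real version of rpow subadditivity for `0 < p ≤ 1`. -/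
private lemma aux_rpow_add_le {x y : ℝ} (hx : 0 ≤ x) (hy : 0 ≤ y) {p : ℝ} (hp : 0 ≤ p)
    (hp1 : p ≤ 1) : (x + y) ^ p ≤ x ^ p + y ^ p := by
  lift x to NNReal using hx
  lift y to NNReal using hy
  have := NNReal.rpow_add_le_add_rpow x y hp hp1
  exact_mod_cast this

/-- Power-mean (Jensen) estimate: if `∑ f ≤ N·B` then `∑ fᵖ ≤ N·Bᵖ` for `0 < p ≤ 1`. -/
private lemma aux_sum_rpow {ι : Type*} [Fintype ι] [Nonempty ι] (f : ι → ℝ)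
    (hf : ∀ i, 0 ≤ f i) {p : ℝ} (hp0 : 0 < p) (hp1 : p ≤ 1) {B : ℝ} (hB0 : 0 ≤ B)
    (hB : ∑ i, f i ≤ (Fintype.card ι : ℝ) * B) :
    ∑ i, f i ^ p ≤ (Fintype.card ι : ℝ) * B ^ p := by
  have hNpos : (0 : ℝ) < (Fintype.card ι : ℝ) := by exact_mod_cast Fintype.card_pos
  set N : ℝ := (Fintype.card ι : ℝ) with hN
  have hw : ∑ _i : ι, (1 / N) = 1 := by
    rw [Finset.sum_const, Finset.card_univ, nsmul_eq_mul, ← hN]; field_simp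
  have hp1' : (1 : ℝ) ≤ 1 / p := by rw [le_div_iff₀ hp0]; linarith
  have key := Real.arith_mean_le_rpow_mean Finset.univ (fun _ => 1 / N)
    (fun i => f i ^ p) (fun i _ => by positivity) hw
    (fun i _ => Real.rpow_nonneg (hf i) p) hp1'
  have hsimp : ∀ i : ι, (f i ^ p) ^ (1 / p) = f i := fun i => by
    rw [← Real.rpow_mul (hf i), mul_one_div_cancel hp0.ne', Real.rpow_one]
  rw [one_div_one_div] at key
  have key2 : (1 / N) * ∑ i, f i ^ p ≤ ((1 / N) * ∑ i, f i) ^ p := by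
    calc (1 / N) * ∑ i, f i ^ p = ∑ i, (1 / N) * f i ^ p := by rw [Finset.mul_sum]
    _ ≤ (∑ i, (1 / N) * (f i ^ p) ^ (1 / p)) ^ p := key
    _ = ((1 / N) * ∑ i, f i) ^ p := by
        congr 1
        rw [Finset.mul_sum]
        exact Finset.sum_congr rfl fun i _ => by rw [hsimp i]
  have h3 : (1 / N) * ∑ i, f i ≤ B := by
    rw [div_mul_eq_mul_div, one_mul, div_le_iff₀ hNpos]
    linarith [hB]
  have h4 : ((1 / N) * ∑ i, f i) ^ p ≤ B ^ p := by
    apply Real.rpow_le_rpow _ h3 hp0.le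
    exact mul_nonneg (by positivity) (Finset.sum_nonneg fun i _ => hf i)
  have h5 : (1 / N) * ∑ i, f i ^ p ≤ B ^ p := le_trans key2 h4
  calc ∑ i, f i ^ p = N * ((1 / N) * ∑ i, f i ^ p) := by field_simp
  _ ≤ N * B ^ p := by
      apply mul_le_mul_of_nonneg_left h5 hNpos.le


set_option maxHeartbeats 2000000 in
/-- Factorization constant for `ℓ^n_p`, `0 < p ≤ 1`: there is `C > 0` (depending only
on `p`) such that for all sufficiently large `n` and all `K ≥ 1`, any factorization
`P ∘ T = Id` of the identity on `ℓ^n_p` through `ℓ^K_∞` with `‖T x‖_∞ ≤ M ‖x‖_p` and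
`‖P w‖_p ≤ L ‖w‖_∞` satisfies `M L ≥ C n^{1/p - 1/2} (log n)^{-1/2}`. -/
theorem factorization_constant_lnp (p : ℝ) (hp0 : 0 < p) (hp1 : p ≤ 1) :
    ∃ C : ℝ, 0 < C ∧ ∃ n₀ : ℕ, ∀ n : ℕ, n₀ ≤ n → ∀ K : ℕ, 1 ≤ K →
      ∀ (T : (Fin n → ℝ) →ₗ[ℝ] (Fin K → ℝ)) (P : (Fin K → ℝ) →ₗ[ℝ] (Fin n → ℝ)),
        P ∘ₗ T = LinearMap.id →
          ∀ M L : ℝ, 0 < M → 0 < L →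
            (∀ x : Fin n → ℝ, ‖T x‖ ≤ M * (∑ i, |x i| ^ p) ^ (1 / p)) →
            (∀ w : Fin K → ℝ, (∑ i, |P w i| ^ p) ^ (1 / p) ≤ L * ‖w‖) →
              C * (n : ℝ) ^ (1 / p - 1 / 2) / Real.sqrt (Real.log n) ≤ M * L := by
  classical
  have hp0' : (0 : ℝ) < 1 / p := by positivity
  have hp1' : (1 : ℝ) ≤ 1 / p := by rw [le_div_iff₀ hp0]; linarith
  refine ⟨(1 / 2 : ℝ) ^ (1 / p) * Real.sqrt (p / 24), ?_, ?_⟩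
  · have h1 : (0:ℝ) < (1 / 2 : ℝ) ^ (1 / p) := Real.rpow_pos_of_pos (by norm_num) _
    have h2 : (0:ℝ) < Real.sqrt (p / 24) := Real.sqrt_pos.2 (by positivity)
    positivity
  refine ⟨⌈(36 : ℝ) / p ^ 2⌉₊ + ⌈Real.sqrt 6 * (2 : ℝ) ^ (1 / p)⌉₊ + 3, ?_⟩
  intro n hn K hK T P hid M L hM hL hT hP
  -- basic numeric facts about n
  have hn3 : 3 ≤ n := by omega
  have hn1 : (1 : ℝ) ≤ (n : ℝ) := by exact_mod_cast le_trans (by norm_num) hn3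
  have hnpos : (0 : ℝ) < (n : ℝ) := by linarith
  have h36 : (36 : ℝ) / p ^ 2 ≤ (n : ℝ) := by
    refine le_trans (Nat.le_ceil _) ?_
    exact_mod_cast le_trans (by omega : ⌈(36 : ℝ) / p ^ 2⌉₊ ≤ _) hn
  have h6 : Real.sqrt 6 * (2 : ℝ) ^ (1 / p) ≤ (n : ℝ) := by
    refine le_trans (Nat.le_ceil _) ?_
    exact_mod_cast le_trans (by omega : ⌈Real.sqrt 6 * (2 : ℝ) ^ (1 / p)⌉₊ ≤ _) hn
  have hlog1 : 1 ≤ Real.log n := by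
    rw [Real.le_log_iff_exp_le hnpos]
    calc Real.exp 1 ≤ 2.7182818286 := Real.exp_one_lt_d9.le
    _ ≤ 3 := by norm_num
    _ ≤ (n : ℝ) := by exact_mod_cast hn3
  have hsqlog1 : 1 ≤ Real.sqrt (Real.log n) := by
    rw [show (1 : ℝ) = Real.sqrt 1 by rw [Real.sqrt_one]]
    exact Real.sqrt_le_sqrt hlog1
  -- case split on size of M * L
  rcases le_or_gt ((n : ℝ) ^ (1 / p - 1 / 2)) (M * L) with hcase | hcase
  · -- easy case : M*L is already large
    have hC1 : (1 / 2 : ℝ) ^ (1 / p) * Real.sqrt (p / 24) ≤ 1 := by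
      have h1 : (1 / 2 : ℝ) ^ (1 / p) ≤ 1 :=
        Real.rpow_le_one (by norm_num) (by norm_num) (by positivity)
      have h2 : Real.sqrt (p / 24) ≤ 1 := by
        rw [show (1 : ℝ) = Real.sqrt 1 by rw [Real.sqrt_one]]
        exact Real.sqrt_le_sqrt (by nlinarith)
      nlinarith [Real.sqrt_nonneg (p / 24), Real.rpow_nonneg (by norm_num : (0:ℝ) ≤ 1/2) (1/p)]
    have hXpos : (0 : ℝ) ≤ (n : ℝ) ^ (1 / p - 1 / 2) := Real.rpow_nonneg hnpos.le _
    calc (1 / 2 : ℝ) ^ (1 / p) * Real.sqrt (p / 24) * (n : ℝ) ^ (1 / p - 1 / 2) /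
          Real.sqrt (Real.log n)
        ≤ 1 * (n : ℝ) ^ (1 / p - 1 / 2) / 1 := by
          apply div_le_div₀ (by linarith) ?_ one_pos hsqlog1
          nlinarith
    _ = (n : ℝ) ^ (1 / p - 1 / 2) := by ring
    _ ≤ M * L := hcase
  · -- hard case
    -- matrix entries
    set t : Fin K → Fin n → ℝ := fun j i => T (Pi.single i 1) j with htdef
    set q : Fin n → Fin K → ℝ := fun i j => P (Pi.single j 1) i with hqdef
    -- expansion of linear maps
    have expand : ∀ {m k : ℕ} (S : (Fin m → ℝ) →ₗ[ℝ] (Fin k → ℝ)) (x : Fin m → ℝ) (j : Fin k),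
        S x j = ∑ i, x i * S (Pi.single i 1) j := by
      intro m k S x j
      have hx : x = ∑ i, x i • (Pi.single i 1 : Fin m → ℝ) := by
        funext r
        rw [Finset.sum_apply]
        simp only [Pi.smul_apply, Pi.single_apply, smul_eq_mul, mul_ite, mul_one, mul_zero]
        rw [Finset.sum_ite_eq Finset.univ r (fun i => x i)]
        simp
      conv_lhs => rw [hx]
      rw [map_sum, Finset.sum_apply]
      refine Finset.sum_congr rfl fun i _ => ?_
      rw [map_smul]
      simp [smul_eq_mul]
    have hTx : ∀ (x : Fin n → ℝ) (j : Fin K), T x j = ∑ i, x i * t j i :=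
      fun x j => expand T x j
    have hPw : ∀ (w : Fin K → ℝ) (i : Fin n), P w i = ∑ j, w j * q i j :=
      fun w i => expand P w i
    -- ℓp norm of basis vectors is 1
    have hsingle : ∀ (m : ℕ) (i : Fin m), (∑ r, |(Pi.single i 1 : Fin m → ℝ) r| ^ p) = 1 := by
      intro m i
      rw [Finset.sum_eq_single i]
      · simp [Real.one_rpow]
      · intro r _ hr
        rw [Pi.single_eq_of_ne hr, abs_zero, Real.zero_rpow hp0.ne']
      · intro h; exact absurd (Finset.mem_univ i) h
    -- entries of T are bounded by M
    have htM : ∀ (j : Fin K) (i : Fin n), |t j i| ≤ M := by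
      intro j i
      have h1 := hT (Pi.single i 1)
      rw [hsingle n i, Real.one_rpow, mul_one] at h1
      calc |t j i| = ‖T (Pi.single i 1) j‖ := (Real.norm_eq_abs _).symm
      _ ≤ ‖T (Pi.single i 1)‖ := norm_le_pi_norm _ j
      _ ≤ M := h1
    -- rows of P have ℓ₁ norm at most L
    have hrow : ∀ i : Fin n, ∑ j, |q i j| ≤ L := by
      intro i
      set w : Fin K → ℝ := fun j => if 0 ≤ q i j then 1 else -1 with hwdef
      have hwnorm : ‖w‖ ≤ 1 := by
        rw [pi_norm_le_iff_of_nonneg (by norm_num : (0:ℝ) ≤ 1)]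
        intro j
        rw [Real.norm_eq_abs]
        simp only [hwdef]
        split <;> norm_num
      have hPwi : P w i = ∑ j, |q i j| := by
        rw [hPw]
        refine Finset.sum_congr rfl fun j _ => ?_
        simp only [hwdef]
        split
        · rw [one_mul, abs_of_nonneg ‹_›]
        · rw [neg_one_mul, abs_of_neg (lt_of_not_ge ‹_›)]
      have hmem : |P w i| ^ p ≤ ∑ r, |P w r| ^ p :=
        Finset.single_le_sum (fun r _ => Real.rpow_nonneg (abs_nonneg _) p) (Finset.mem_univ i)
      have h1 : |P w i| ≤ (∑ r, |P w r| ^ p) ^ (1 / p) := by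
        calc |P w i| = (|P w i| ^ p) ^ (1 / p) := by
              rw [← Real.rpow_mul (abs_nonneg _), mul_one_div_cancel hp0.ne', Real.rpow_one]
        _ ≤ (∑ r, |P w r| ^ p) ^ (1 / p) :=
              Real.rpow_le_rpow (Real.rpow_nonneg (abs_nonneg _) _) hmem (by positivity)
      calc ∑ j, |q i j| = P w i := hPwi.symm
      _ ≤ |P w i| := le_abs_self _
      _ ≤ (∑ r, |P w r| ^ p) ^ (1 / p) := h1
      _ ≤ L * ‖w‖ := hP w
      _ ≤ L * 1 := mul_le_mul_of_nonneg_left hwnorm hL.le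
      _ = L := mul_one L
    -- constants
    set A : ℝ := 6 * n * M ^ 2 with hA
    have hApos : 0 < A := by positivity
    set ell : ℝ := (4 / p) * Real.log n with hell
    have hell1 : 1 ≤ ell := by
      calc (1 : ℝ) ≤ Real.log n := hlog1
      _ = 1 * Real.log n := (one_mul _).symm
      _ ≤ (4 / p) * Real.log n := by
          apply mul_le_mul_of_nonneg_right _ (by linarith)
          rw [le_div_iff₀ hp0]; linarith
    have hellpos : 0 < ell := lt_of_lt_of_le one_pos hell1
    set b : ℝ := Real.sqrt (A * ell) with hb
    have hbpos : 0 < b := Real.sqrt_pos.2 (by positivity)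
    have hb2 : b ^ 2 = A * ell := Real.sq_sqrt (by positivity)
    set lam : ℝ := 2 * b / A with hlam
    have hlampos : 0 < lam := by positivity
    have hlamb : lam * b = 2 * ell := by
      calc lam * b = 2 * b ^ 2 / A := by rw [hlam]; ring
      _ = 2 * (ell * A) / A := by rw [hb2]; ring_nf
      _ = 2 * (ell * (A / A)) := by rw [mul_div_assoc, mul_div_assoc]
      _ = 2 * ell := by rw [div_self hApos.ne', mul_one]
    -- lam * M ≤ 1
    have hsqn6 : 6 / p ≤ Real.sqrt n := by
      rw [Real.le_sqrt (by positivity) hnpos.le]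
      calc (6 / p) ^ 2 = 36 / p ^ 2 := by ring
      _ ≤ (n : ℝ) := h36
    have hlogle : Real.log n ≤ 2 * Real.sqrt n := by
      have h1 : Real.log (Real.sqrt n) ≤ Real.sqrt n - 1 :=
        Real.log_le_sub_one_of_pos (Real.sqrt_pos.2 hnpos)
      rw [Real.log_sqrt hnpos.le] at h1
      linarith
    have h9 : lam ^ 2 = 4 * ell / A := by
      calc lam ^ 2 = 4 * b ^ 2 / A ^ 2 := by rw [hlam]; ring
      _ = 4 * (A * ell) / A ^ 2 := by rw [hb2]
      _ = 4 * ell / A * (A / A) := by ring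
      _ = 4 * ell / A := by rw [div_self hApos.ne', mul_one]
    have hlamM : lam * M ≤ 1 := by
      have hsq : (lam * M) ^ 2 = 2 * ell / (3 * n) := by
        calc (lam * M) ^ 2 = lam ^ 2 * M ^ 2 := by ring
        _ = 4 * ell / A * M ^ 2 := by rw [h9]
        _ = 4 * ell * M ^ 2 / A := by ring
        _ = 2 * ell / (3 * n) := by
            rw [hA, div_eq_div_iff (by positivity : (0:ℝ) < 6 * (n:ℝ) * M ^ 2).ne'
              (by positivity : (0:ℝ) < 3 * (n:ℝ)).ne']
            ring
      have h2 : 2 * ell / (3 * n) ≤ 1 := by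
        rw [div_le_one (by positivity)]
        have hsn : (0:ℝ) ≤ Real.sqrt n := Real.sqrt_nonneg _
        have hs2 : Real.sqrt n * Real.sqrt n = (n:ℝ) := Real.mul_self_sqrt hnpos.le
        -- 2*ell = (8/p) log n ≤ (16/p)√n ≤ (8/3)(6/p)√n ≤ (8/3)√n√n = (8/3) n ≤ 3n
        have h3 : 2 * ell ≤ (16 / p) * Real.sqrt n := by
          rw [hell]
          calc 2 * ((4 / p) * Real.log n) = (8 / p) * Real.log n := by ring
          _ ≤ (8 / p) * (2 * Real.sqrt n) := by
              apply mul_le_mul_of_nonneg_left hlogle (by positivity)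
          _ = (16 / p) * Real.sqrt n := by ring
        have h4 : (16 / p) * Real.sqrt n ≤ (8 / 3) * ((n : ℝ)) := by
          calc (16 / p) * Real.sqrt n = (8 / 3) * ((6 / p) * Real.sqrt n) := by ring
          _ ≤ (8 / 3) * (Real.sqrt n * Real.sqrt n) := by
              apply mul_le_mul_of_nonneg_left _ (by norm_num)
              exact mul_le_mul_of_nonneg_right hsqn6 hsn
          _ = (8 / 3) * (n : ℝ) := by rw [hs2]
        linarith
      have h5 : (lam * M) ^ 2 ≤ 1 := by rw [hsq]; exact h2
      exact (pow_le_one_iff_of_nonneg (by positivity) two_ne_zero).mp h5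
    -- random signs and truncation
    set sg : (Fin n → Bool) → (Fin n → ℝ) := fun χ i => if χ i then 1 else -1 with hsg
    set wc : (Fin n → Bool) → (Fin K → ℝ) :=
      fun χ j => max (-b) (min b (T (sg χ) j)) with hwc
    set ee : (Fin n → Bool) → (Fin K → ℝ) := fun χ => T (sg χ) - wc χ with hee
    have hwnormb : ∀ χ, ‖wc χ‖ ≤ b := by
      intro χ
      rw [pi_norm_le_iff_of_nonneg hbpos.le]
      intro j
      rw [Real.norm_eq_abs, abs_le]
      constructor
      · exact le_max_left _ _
      · exact max_le (by linarith) (min_le_left _ _)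
    -- pointwise bound on the truncation error
    have hebound : ∀ (χ : Fin n → Bool) (j : Fin K), |ee χ j| ≤
        (1 / lam) * Real.exp (-(lam * b)) *
          (Real.exp (lam * T (sg χ) j) + Real.exp (-(lam * T (sg χ) j))) := by
      intro χ j
      have heej : ee χ j = T (sg χ) j - max (-b) (min b (T (sg χ) j)) := rfl
      set X : ℝ := T (sg χ) j with hX
      have hrhs0 : ∀ Y : ℝ, lam * Y ≤ Real.exp (lam * Y) := fun Y =>
        le_trans (by linarith [Real.add_one_le_exp (lam * Y)]) (le_refl _)
      rcases le_total X b with h1 | h1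
      · rcases le_total (-b) X with h2 | h2
        · -- |X| ≤ b : no truncation
          have hclamp : max (-b) (min b X) = X := by
            rw [min_eq_right h1, max_eq_right h2]
          rw [heej, hclamp, sub_self, abs_zero]
          positivity
        · -- X ≤ -b
          have hclamp : max (-b) (min b X) = -b := by
            rw [min_eq_right (by linarith), max_eq_left h2]
          rw [heej, hclamp]
          rw [abs_of_nonpos (by linarith)]
          have key : -X - b ≤ (1 / lam) * Real.exp (lam * (-X - b)) := by
            have h3 : lam * (-X - b) ≤ Real.exp (lam * (-X - b)) := hrhs0 _
            calc -X - b = (1 / lam) * (lam * (-X - b)) := by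
                  field_simp
            _ ≤ (1 / lam) * Real.exp (lam * (-X - b)) :=
                  mul_le_mul_of_nonneg_left h3 (by positivity)
          have hsplit : Real.exp (lam * (-X - b)) =
              Real.exp (-(lam * b)) * Real.exp (-(lam * X)) := by
            rw [← Real.exp_add]; ring_nf
          calc -(X - -b) = -X - b := by ring
          _ ≤ (1 / lam) * Real.exp (lam * (-X - b)) := key
          _ = (1 / lam) * (Real.exp (-(lam * b)) * Real.exp (-(lam * X))) := by rw [hsplit]
          _ ≤ (1 / lam) * Real.exp (-(lam * b)) *
                (Real.exp (lam * X) + Real.exp (-(lam * X))) := by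
              have := (Real.exp_pos (lam * X)).le
              have h4 : Real.exp (-(lam * X)) ≤
                  Real.exp (lam * X) + Real.exp (-(lam * X)) := by linarith
              calc (1 / lam) * (Real.exp (-(lam * b)) * Real.exp (-(lam * X)))
                  = (1 / lam) * Real.exp (-(lam * b)) * Real.exp (-(lam * X)) := by ring
              _ ≤ (1 / lam) * Real.exp (-(lam * b)) *
                    (Real.exp (lam * X) + Real.exp (-(lam * X))) := by
                  apply mul_le_mul_of_nonneg_left h4 (by positivity)
      · -- b ≤ X
        have hclamp : max (-b) (min b X) = b := by
          rw [min_eq_left h1, max_eq_right (by linarith)]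
        rw [heej, hclamp]
        rw [abs_of_nonneg (by linarith)]
        have key : X - b ≤ (1 / lam) * Real.exp (lam * (X - b)) := by
          have h3 : lam * (X - b) ≤ Real.exp (lam * (X - b)) := hrhs0 _
          calc X - b = (1 / lam) * (lam * (X - b)) := by field_simp
          _ ≤ (1 / lam) * Real.exp (lam * (X - b)) :=
                mul_le_mul_of_nonneg_left h3 (by positivity)
        have hsplit : Real.exp (lam * (X - b)) =
            Real.exp (-(lam * b)) * Real.exp (lam * X) := by
          rw [← Real.exp_add]; ring_nf
        calc X - b ≤ (1 / lam) * Real.exp (lam * (X - b)) := key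
        _ = (1 / lam) * (Real.exp (-(lam * b)) * Real.exp (lam * X)) := by rw [hsplit]
        _ ≤ (1 / lam) * Real.exp (-(lam * b)) *
              (Real.exp (lam * X) + Real.exp (-(lam * X))) := by
            have := (Real.exp_pos (-(lam * X))).le
            have h4 : Real.exp (lam * X) ≤
                Real.exp (lam * X) + Real.exp (-(lam * X)) := by linarith
            calc (1 / lam) * (Real.exp (-(lam * b)) * Real.exp (lam * X))
                = (1 / lam) * Real.exp (-(lam * b)) * Real.exp (lam * X) := by ring
            _ ≤ (1 / lam) * Real.exp (-(lam * b)) *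
                  (Real.exp (lam * X) + Real.exp (-(lam * X))) := by
                apply mul_le_mul_of_nonneg_left h4 (by positivity)
    -- MGF estimate
    have hmgf : ∀ (j : Fin K) (s : ℝ), |s| = 1 →
        ∑ χ : Fin n → Bool, Real.exp (s * (lam * T (sg χ) j)) ≤
          (2 : ℝ) ^ n * Real.exp ell := by
      intro j s hs
      have ha : ∀ i, |s * lam * t j i| ≤ 1 := by
        intro i
        rw [abs_mul, abs_mul, hs, one_mul, abs_of_pos hlampos]
        calc lam * |t j i| ≤ lam * M := mul_le_mul_of_nonneg_left (htM j i) hlampos.le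
        _ ≤ 1 := hlamM
      have hform : ∀ χ : Fin n → Bool,
          s * (lam * T (sg χ) j) =
            ∑ i, (s * lam * t j i) * (if χ i then (1 : ℝ) else -1) := by
        intro χ
        rw [hTx (sg χ) j, Finset.mul_sum, Finset.mul_sum]
        refine Finset.sum_congr rfl fun i _ => ?_
        simp only [hsg]
        ring
      calc ∑ χ : Fin n → Bool, Real.exp (s * (lam * T (sg χ) j))
          = ∑ χ : Fin n → Bool,
              Real.exp (∑ i, (s * lam * t j i) * (if χ i then (1 : ℝ) else -1)) :=
            Finset.sum_congr rfl fun χ _ => by rw [hform χ]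
      _ ≤ (2 : ℝ) ^ n * Real.exp (3 / 2 * ∑ i, (s * lam * t j i) ^ 2) :=
            aux_mgf _ ha
      _ ≤ (2 : ℝ) ^ n * Real.exp ell := by
          apply mul_le_mul_of_nonneg_left _ (by positivity)
          apply Real.exp_le_exp.2
          have hterm : ∀ i, (s * lam * t j i) ^ 2 ≤ lam ^ 2 * M ^ 2 := by
            intro i
            have h1 : (s * lam * t j i) ^ 2 = s ^ 2 * lam ^ 2 * (t j i) ^ 2 := by ring
            have hs2 : s ^ 2 = 1 := by rw [← sq_abs, hs, one_pow]
            rw [h1, hs2, one_mul]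
            apply mul_le_mul_of_nonneg_left _ (sq_nonneg lam)
            exact sq_le_sq' (by linarith [abs_le.1 (htM j i)]) (by linarith [abs_le.1 (htM j i)])
          calc 3 / 2 * ∑ i, (s * lam * t j i) ^ 2
              ≤ 3 / 2 * ((n : ℝ) * (lam ^ 2 * M ^ 2)) := by
                apply mul_le_mul_of_nonneg_left _ (by norm_num)
                calc ∑ i, (s * lam * t j i) ^ 2 ≤ ∑ _i : Fin n, lam ^ 2 * M ^ 2 :=
                      Finset.sum_le_sum fun i _ => hterm i
                _ = (n : ℝ) * (lam ^ 2 * M ^ 2) := by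
                    rw [Finset.sum_const, Finset.card_univ, Fintype.card_fin, nsmul_eq_mul]
          _ = ell := by
              have h10 : (3 : ℝ) / 2 * ((n : ℝ) * (lam ^ 2 * M ^ 2)) = lam ^ 2 * A / 4 := by
                rw [hA]; ring
              rw [h10, h9]
              calc 4 * ell / A * A / 4 = ell * (A / A) := by ring
              _ = ell := by rw [div_self hApos.ne', mul_one]
    -- summed truncation error per coordinate j
    set beta : ℝ := A / b * Real.exp (-ell) with hbeta
    have hbetapos : 0 < beta := by positivity
    have heesum : ∀ j : Fin K, ∑ χ : Fin n → Bool, |ee χ j| ≤ (2 : ℝ) ^ n * beta := by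
      intro j
      have h1 : ∑ χ : Fin n → Bool, |ee χ j| ≤
          ∑ χ : Fin n → Bool, (1 / lam) * Real.exp (-(lam * b)) *
            (Real.exp (lam * T (sg χ) j) + Real.exp (-(lam * T (sg χ) j))) :=
        Finset.sum_le_sum fun χ _ => hebound χ j
      have h2 : ∑ χ : Fin n → Bool, (1 / lam) * Real.exp (-(lam * b)) *
            (Real.exp (lam * T (sg χ) j) + Real.exp (-(lam * T (sg χ) j)))
          = (1 / lam) * Real.exp (-(lam * b)) *
            ((∑ χ : Fin n → Bool, Real.exp (lam * T (sg χ) j)) +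
              ∑ χ : Fin n → Bool, Real.exp (-(lam * T (sg χ) j))) := by
        rw [← Finset.mul_sum, Finset.sum_add_distrib]
      have h3 : ∑ χ : Fin n → Bool, Real.exp (lam * T (sg χ) j) ≤
          (2 : ℝ) ^ n * Real.exp ell := by
        have := hmgf j 1 (by norm_num)
        simpa using this
      have h4 : ∑ χ : Fin n → Bool, Real.exp (-(lam * T (sg χ) j)) ≤
          (2 : ℝ) ^ n * Real.exp ell := by
        have := hmgf j (-1) (by norm_num)
        simpa [neg_one_mul] using this
      calc ∑ χ : Fin n → Bool, |ee χ j|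
          ≤ ∑ χ : Fin n → Bool, (1 / lam) * Real.exp (-(lam * b)) *
              (Real.exp (lam * T (sg χ) j) + Real.exp (-(lam * T (sg χ) j))) := h1
      _ = (1 / lam) * Real.exp (-(lam * b)) *
            ((∑ χ : Fin n → Bool, Real.exp (lam * T (sg χ) j)) +
              ∑ χ : Fin n → Bool, Real.exp (-(lam * T (sg χ) j))) := h2
      _ ≤ (1 / lam) * Real.exp (-(lam * b)) *
            ((2 : ℝ) ^ n * Real.exp ell + (2 : ℝ) ^ n * Real.exp ell) := by
          apply mul_le_mul_of_nonneg_left (add_le_add h3 h4) (by positivity)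
      _ = (2 : ℝ) ^ n * ((2 / lam) * (Real.exp (-(lam * b)) * Real.exp ell)) := by ring
      _ = (2 : ℝ) ^ n * beta := by
          congr 1
          have h5 : 2 / lam = A / b := by
            rw [hlam]
            rw [div_div_eq_mul_div, mul_comm 2 b, mul_div_assoc]
            ring
          have h6 : Real.exp (-(lam * b)) * Real.exp ell = Real.exp (-ell) := by
            rw [← Real.exp_add, hlamb]
            congr 1
            ring
          rw [h5, h6, hbeta]
    -- cardinality of the sign space
    have hNcard : ((Fintype.card (Fin n → Bool)) : ℝ) = (2 : ℝ) ^ n := by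
      rw [Fintype.card_fun, Fintype.card_bool, Fintype.card_fin]
      push_cast
      ring
    -- averaged row bounds
    have hrowsum : ∀ i : Fin n,
        ∑ χ : Fin n → Bool, |P (ee χ) i| ≤ (2 : ℝ) ^ n * (L * beta) := by
      intro i
      have h1 : ∀ χ : Fin n → Bool, |P (ee χ) i| ≤ ∑ j, |q i j| * |ee χ j| := by
        intro χ
        rw [hPw]
        calc |∑ j, ee χ j * q i j| ≤ ∑ j, |ee χ j * q i j| := Finset.abs_sum_le_sum_abs _ _
        _ = ∑ j, |q i j| * |ee χ j| :=
            Finset.sum_congr rfl fun j _ => by rw [abs_mul]; ring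
      calc ∑ χ : Fin n → Bool, |P (ee χ) i|
          ≤ ∑ χ : Fin n → Bool, ∑ j, |q i j| * |ee χ j| :=
            Finset.sum_le_sum fun χ _ => h1 χ
      _ = ∑ j, ∑ χ : Fin n → Bool, |q i j| * |ee χ j| := Finset.sum_comm
      _ = ∑ j, |q i j| * ∑ χ : Fin n → Bool, |ee χ j| :=
          Finset.sum_congr rfl fun j _ => by rw [Finset.mul_sum]
      _ ≤ ∑ j, |q i j| * ((2 : ℝ) ^ n * beta) :=
          Finset.sum_le_sum fun j _ => mul_le_mul_of_nonneg_left (heesum j) (abs_nonneg _)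
      _ = (∑ j, |q i j|) * ((2 : ℝ) ^ n * beta) := by rw [Finset.sum_mul]
      _ ≤ L * ((2 : ℝ) ^ n * beta) :=
          mul_le_mul_of_nonneg_right (hrow i) (by positivity)
      _ = (2 : ℝ) ^ n * (L * beta) := by ring
    -- Jensen (power mean) for each coordinate
    have hjensen : ∀ i : Fin n,
        ∑ χ : Fin n → Bool, |P (ee χ) i| ^ p ≤ (2 : ℝ) ^ n * (L * beta) ^ p := by
      intro i
      have h := aux_sum_rpow (fun χ : Fin n → Bool => |P (ee χ) i|)
        (fun χ => abs_nonneg _) hp0 hp1 (by positivity : (0:ℝ) ≤ L * beta)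
        (by rw [hNcard]; exact hrowsum i)
      rwa [hNcard] at h
    -- pigeonhole: pick a good sign pattern
    have htot : ∑ χ : Fin n → Bool, (∑ i, |P (ee χ) i| ^ p) ≤
        ∑ χ : Fin n → Bool, ((n : ℝ) * (L * beta) ^ p) := by
      have hcomm : ∑ χ : Fin n → Bool, (∑ i, |P (ee χ) i| ^ p) =
          ∑ i : Fin n, ∑ χ : Fin n → Bool, |P (ee χ) i| ^ p := Finset.sum_comm
      rw [hcomm]
      calc ∑ i : Fin n, ∑ χ : Fin n → Bool, |P (ee χ) i| ^ p
          ≤ ∑ _i : Fin n, (2 : ℝ) ^ n * (L * beta) ^ p :=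
            Finset.sum_le_sum fun i _ => hjensen i
      _ = (n : ℝ) * ((2 : ℝ) ^ n * (L * beta) ^ p) := by
          rw [Finset.sum_const, Finset.card_univ, Fintype.card_fin, nsmul_eq_mul]
      _ = ∑ _χ : Fin n → Bool, ((n : ℝ) * (L * beta) ^ p) := by
          rw [Finset.sum_const, Finset.card_univ, nsmul_eq_mul, hNcard]
          ring
    obtain ⟨χ₀, -, hχ₀⟩ := Finset.exists_le_of_sum_le Finset.univ_nonempty htot
    -- smallness of L * beta
    have hAb : A / b ≤ Real.sqrt A := by
      have hsell : 1 ≤ Real.sqrt ell := by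
        rw [show (1:ℝ) = Real.sqrt 1 by rw [Real.sqrt_one]]
        exact Real.sqrt_le_sqrt hell1
      have hsA : Real.sqrt A * Real.sqrt A = A := Real.mul_self_sqrt hApos.le
      rw [hb, Real.sqrt_mul hApos.le, div_le_iff₀ (by positivity)]
      calc A = Real.sqrt A * Real.sqrt A * 1 := by rw [hsA, mul_one]
      _ ≤ Real.sqrt A * Real.sqrt A * Real.sqrt ell :=
          mul_le_mul_of_nonneg_left hsell (by positivity)
      _ = Real.sqrt A * (Real.sqrt A * Real.sqrt ell) := by ring
    have hsqrtA : Real.sqrt A = M * Real.sqrt (6 * n) := by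
      rw [hA, show 6 * (n:ℝ) * M ^ 2 = M ^ 2 * (6 * n) from by ring,
        Real.sqrt_mul (sq_nonneg M), Real.sqrt_sq hM.le]
    have hexpell : Real.exp (-ell) = (n : ℝ) ^ (-(4 / p)) := by
      rw [Real.rpow_def_of_pos hnpos]
      congr 1
      rw [hell]
      ring
    have hLbeta : L * beta ≤ (1 / 2 : ℝ) ^ (1 / p) := by
      have h1 : L * beta ≤ L * (M * Real.sqrt (6 * n) * (n : ℝ) ^ (-(4 / p))) := by
        rw [hbeta, hexpell]
        have h2 : A / b * (n : ℝ) ^ (-(4 / p)) ≤ Real.sqrt A * (n : ℝ) ^ (-(4 / p)) :=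
          mul_le_mul_of_nonneg_right hAb (Real.rpow_nonneg hnpos.le _)
        rw [hsqrtA] at h2
        exact mul_le_mul_of_nonneg_left h2 hL.le
      have h3 : L * (M * Real.sqrt (6 * n) * (n : ℝ) ^ (-(4 / p))) =
          M * L * (Real.sqrt 6 * (Real.sqrt n * (n : ℝ) ^ (-(4 / p)))) := by
        rw [Real.sqrt_mul (by norm_num : (0:ℝ) ≤ 6)]
        ring
      have h4 : M * L * (Real.sqrt 6 * (Real.sqrt n * (n : ℝ) ^ (-(4 / p)))) ≤
          (n : ℝ) ^ (1 / p - 1 / 2) * (Real.sqrt 6 * (Real.sqrt n * (n : ℝ) ^ (-(4 / p)))) :=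
        mul_le_mul_of_nonneg_right hcase.le (by positivity)
      have h5 : (n : ℝ) ^ (1 / p - 1 / 2) * (Real.sqrt 6 * (Real.sqrt n * (n : ℝ) ^ (-(4 / p)))) =
          Real.sqrt 6 * (n : ℝ) ^ (-(3 / p)) := by
        rw [Real.sqrt_eq_rpow (n:ℝ)]
        rw [show (n:ℝ) ^ (1 / p - 1 / 2) * (Real.sqrt 6 * ((n:ℝ) ^ (1 / (2:ℝ)) * (n:ℝ) ^ (-(4 / p)))) =
            Real.sqrt 6 * ((n:ℝ) ^ (1 / p - 1 / 2) * (n:ℝ) ^ (1 / (2:ℝ)) * (n:ℝ) ^ (-(4 / p))) from by ring]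
        congr 1
        rw [← Real.rpow_add hnpos, ← Real.rpow_add hnpos]
        congr 1
        ring
      have h6 : Real.sqrt 6 * (n : ℝ) ^ (-(3 / p)) ≤ (1 / 2 : ℝ) ^ (1 / p) := by
        have hp3 : (1:ℝ) ≤ 3 / p := by rw [le_div_iff₀ hp0]; linarith
        have hkey : Real.sqrt 6 * (2:ℝ) ^ (1 / p) ≤ (n : ℝ) ^ (3 / p) := by
          calc Real.sqrt 6 * (2:ℝ) ^ (1 / p) ≤ (n : ℝ) := h6
          _ = (n : ℝ) ^ (1:ℝ) := (Real.rpow_one _).symm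
          _ ≤ (n : ℝ) ^ (3 / p) := Real.rpow_le_rpow_of_exponent_le hn1 hp3
        have h2pos : (0:ℝ) < (2:ℝ) ^ (1 / p) := Real.rpow_pos_of_pos (by norm_num) _
        have hnp3 : (0:ℝ) < (n : ℝ) ^ (3 / p) := Real.rpow_pos_of_pos hnpos _
        have hhalfval : (1 / 2 : ℝ) ^ (1 / p) = 1 / (2:ℝ) ^ (1 / p) := by
          rw [Real.div_rpow (by norm_num : (0:ℝ) ≤ 1) (by norm_num : (0:ℝ) ≤ 2), Real.one_rpow]
        have hnegval : (n : ℝ) ^ (-(3 / p)) = 1 / (n : ℝ) ^ (3 / p) := by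
          rw [Real.rpow_neg hnpos.le, one_div]
        rw [hhalfval, hnegval, mul_one_div, div_le_div_iff₀ hnp3 h2pos]
        linarith [hkey]
      linarith [h1, h3 ▸ h1, h4, h5 ▸ h4, h6]
    have hhalf : (L * beta) ^ p ≤ 1 / 2 := by
      calc (L * beta) ^ p ≤ ((1 / 2 : ℝ) ^ (1 / p)) ^ p :=
            Real.rpow_le_rpow (by positivity) hLbeta hp0.le
      _ = 1 / 2 := by
          rw [← Real.rpow_mul (by norm_num : (0:ℝ) ≤ 1/2), one_div_mul_cancel hp0.ne',
            Real.rpow_one]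
    -- per-coordinate lower bound
    have hperco : ∀ i : Fin n, (1 : ℝ) ≤ |P (wc χ₀) i| ^ p + |P (ee χ₀) i| ^ p := by
      intro i
      have hadd : wc χ₀ + ee χ₀ = T (sg χ₀) := by
        simp only [hee]
        abel
      have hsplit : P (wc χ₀) i + P (ee χ₀) i = sg χ₀ i := by
        have hma := map_add P (wc χ₀) (ee χ₀)
        have h2 : P (T (sg χ₀)) = sg χ₀ := by
          have := LinearMap.ext_iff.mp hid (sg χ₀)
          simpa using this
        calc P (wc χ₀) i + P (ee χ₀) i = (P (wc χ₀) + P (ee χ₀)) i := rfl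
        _ = P (wc χ₀ + ee χ₀) i := by rw [← hma]
        _ = P (T (sg χ₀)) i := by rw [hadd]
        _ = sg χ₀ i := by rw [h2]
      have habs1 : |sg χ₀ i| = 1 := by
        simp only [hsg]
        split <;> norm_num
      have htri : (1 : ℝ) ≤ |P (wc χ₀) i| + |P (ee χ₀) i| := by
        calc (1:ℝ) = |P (wc χ₀) i + P (ee χ₀) i| := by rw [hsplit, habs1]
        _ ≤ |P (wc χ₀) i| + |P (ee χ₀) i| := abs_add_le _ _
      calc (1 : ℝ) = 1 ^ p := (Real.one_rpow p).symm
      _ ≤ (|P (wc χ₀) i| + |P (ee χ₀) i|) ^ p :=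
            Real.rpow_le_rpow (by norm_num) htri hp0.le
      _ ≤ |P (wc χ₀) i| ^ p + |P (ee χ₀) i| ^ p :=
            aux_rpow_add_le (abs_nonneg _) (abs_nonneg _) hp0.le hp1
    -- summing up
    have hsum1 : (n : ℝ) ≤ (∑ i, |P (wc χ₀) i| ^ p) + ∑ i, |P (ee χ₀) i| ^ p := by
      calc (n : ℝ) = ∑ _i : Fin n, (1:ℝ) := by
            rw [Finset.sum_const, Finset.card_univ, Fintype.card_fin, nsmul_eq_mul, mul_one]
      _ ≤ ∑ i, (|P (wc χ₀) i| ^ p + |P (ee χ₀) i| ^ p) :=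
            Finset.sum_le_sum fun i _ => hperco i
      _ = (∑ i, |P (wc χ₀) i| ^ p) + ∑ i, |P (ee χ₀) i| ^ p := Finset.sum_add_distrib
    have hPwcb : ∑ i, |P (wc χ₀) i| ^ p ≤ (L * b) ^ p := by
      have hS0 : (0:ℝ) ≤ ∑ i, |P (wc χ₀) i| ^ p :=
        Finset.sum_nonneg fun i _ => Real.rpow_nonneg (abs_nonneg _) p
      have h1 : (∑ i, |P (wc χ₀) i| ^ p) ^ (1 / p) ≤ L * b := by
        calc (∑ i, |P (wc χ₀) i| ^ p) ^ (1 / p) ≤ L * ‖wc χ₀‖ := hP (wc χ₀)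
        _ ≤ L * b := mul_le_mul_of_nonneg_left (hwnormb χ₀) hL.le
      calc ∑ i, |P (wc χ₀) i| ^ p
          = ((∑ i, |P (wc χ₀) i| ^ p) ^ (1 / p)) ^ p := by
            rw [← Real.rpow_mul hS0, one_div_mul_cancel hp0.ne', Real.rpow_one]
      _ ≤ (L * b) ^ p := Real.rpow_le_rpow (Real.rpow_nonneg hS0 _) h1 hp0.le
    have hup : ∑ i, |P (ee χ₀) i| ^ p ≤ (n : ℝ) / 2 := by
      calc ∑ i, |P (ee χ₀) i| ^ p ≤ (n : ℝ) * (L * beta) ^ p := hχ₀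
      _ ≤ (n : ℝ) * (1 / 2) := mul_le_mul_of_nonneg_left hhalf hnpos.le
      _ = (n : ℝ) / 2 := by ring
    have hfin : (n : ℝ) / 2 ≤ (L * b) ^ p := by linarith
    have hLb0 : (0:ℝ) ≤ L * b := by positivity
    have hfin2 : ((n : ℝ) / 2) ^ (1 / p) ≤ L * b := by
      calc ((n : ℝ) / 2) ^ (1 / p) ≤ ((L * b) ^ p) ^ (1 / p) :=
            Real.rpow_le_rpow (by positivity) hfin (by positivity)
      _ = L * b := by
          rw [← Real.rpow_mul hLb0, mul_one_div_cancel hp0.ne', Real.rpow_one]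
    -- final algebra
    have hbeq : b = M * Real.sqrt ((24 / p) * ((n : ℝ) * Real.log n)) := by
      rw [hb, hA, hell,
        show 6 * (n:ℝ) * M ^ 2 * (4 / p * Real.log n) =
          M ^ 2 * ((24 / p) * ((n:ℝ) * Real.log n)) from by ring,
        Real.sqrt_mul (sq_nonneg M), Real.sqrt_sq hM.le]
    have hSpos : 0 < Real.sqrt (Real.log n) := lt_of_lt_of_le one_pos hsqlog1
    have hprod : ((n : ℝ) / 2) ^ (1 / p) ≤
        M * L * (Real.sqrt (24 / p) * (Real.sqrt n * Real.sqrt (Real.log n))) := by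
      calc ((n : ℝ) / 2) ^ (1 / p) ≤ L * b := hfin2
      _ = M * L * (Real.sqrt (24 / p) * (Real.sqrt n * Real.sqrt (Real.log n))) := by
          rw [hbeq, Real.sqrt_mul (by positivity : (0:ℝ) ≤ 24 / p),
            Real.sqrt_mul hnpos.le]
          ring
    have hid2 : ((1 / 2 : ℝ) ^ (1 / p) * Real.sqrt (p / 24)) * (n : ℝ) ^ (1 / p - 1 / 2) *
        (Real.sqrt (24 / p) * Real.sqrt n) = ((n : ℝ) / 2) ^ (1 / p) := by
      have hEsq : Real.sqrt (p / 24) * Real.sqrt (24 / p) = 1 := by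
        rw [← Real.sqrt_mul (by positivity : (0:ℝ) ≤ p / 24),
          show (p / 24) * (24 / p) = 1 from by field_simp]
        exact Real.sqrt_one
      have hnr : (n : ℝ) ^ (1 / p - 1 / 2) * Real.sqrt n = (n : ℝ) ^ (1 / p) := by
        rw [Real.sqrt_eq_rpow, ← Real.rpow_add hnpos]
        congr 1
        norm_num
      have hhalfpow : ((n : ℝ) / 2) ^ (1 / p) = (1 / 2 : ℝ) ^ (1 / p) * (n : ℝ) ^ (1 / p) := by
        rw [← Real.mul_rpow (by norm_num : (0:ℝ) ≤ 1 / 2) hnpos.le]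
        congr 1
        ring
      calc ((1 / 2 : ℝ) ^ (1 / p) * Real.sqrt (p / 24)) * (n : ℝ) ^ (1 / p - 1 / 2) *
            (Real.sqrt (24 / p) * Real.sqrt n)
          = (1 / 2 : ℝ) ^ (1 / p) * ((n : ℝ) ^ (1 / p - 1 / 2) * Real.sqrt n) *
            (Real.sqrt (p / 24) * Real.sqrt (24 / p)) := by ring
      _ = (1 / 2 : ℝ) ^ (1 / p) * (n : ℝ) ^ (1 / p) * 1 := by rw [hnr, hEsq]
      _ = ((n : ℝ) / 2) ^ (1 / p) := by rw [hhalfpow]; ring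
    rw [div_le_iff₀ hSpos]
    have hEu : (0:ℝ) < Real.sqrt (24 / p) * Real.sqrt n := by
      have h1 : (0:ℝ) < Real.sqrt (24 / p) := Real.sqrt_pos.2 (by positivity)
      have h2 : (0:ℝ) < Real.sqrt n := Real.sqrt_pos.2 hnpos
      positivity
    have hfinal : ((1 / 2 : ℝ) ^ (1 / p) * Real.sqrt (p / 24)) * (n : ℝ) ^ (1 / p - 1 / 2) *
        (Real.sqrt (24 / p) * Real.sqrt n) ≤
        (M * L * Real.sqrt (Real.log n)) * (Real.sqrt (24 / p) * Real.sqrt n) := by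
      rw [hid2]
      calc ((n : ℝ) / 2) ^ (1 / p)
          ≤ M * L * (Real.sqrt (24 / p) * (Real.sqrt n * Real.sqrt (Real.log n))) := hprod
      _ = (M * L * Real.sqrt (Real.log n)) * (Real.sqrt (24 / p) * Real.sqrt n) := by ring
    exact le_of_mul_le_mul_right hfinal hEu
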